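/- Let λ ≥ ω₁ be a cardinal and let τ be an infinite countable ordinal. Then (∗)^τ_λ implies 2^{ℵ₀} > λ. -/

import Mathlib

open Ordinal Cardinal

/-- The order type of a set of ordinals: the ordinal isomorphic to `(A, <)`. -/
noncomputable def orderType (A : Set Ordinal) : Ordinal :=
  Ordinal.type ((· < ·) : A → A → Prop)

/-- `C` is a club in `ω₁`: a set of countable ordinals, unbounded in `ω₁`, and closed
(for every limit `δ < ω₁`, if `C ∩ δ` is unbounded in `δ` then `δ ∈ C`). -/
def IsClubOmegaOne (C : Set Ordinal) : Prop :=
  C ⊆ Set.Iio ω₁ ∧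
  (∀ α < ω₁, ∃ β ∈ C, α < β) ∧
  ∀ δ < ω₁, Order.IsSuccLimit δ → (∀ α < δ, ∃ β ∈ C, α < β ∧ β < δ) → δ ∈ C

/-- `A` is a cofinal subset of `δ` of order type `ω`. -/
def IsLadderAt (δ : Ordinal) (A : Set Ordinal) : Prop :=
  A ⊆ Set.Iio δ ∧ sSup A = δ ∧ orderType A = Ordinal.omega0


/-- The statement `(∗)^τ_λ`: for every cardinal `λ' ≤ λ` and every sequence `(A i)_{i<λ'}`
of subsets of `ω₁` of order type at most `τ`, there is a club `C ⊆ ω₁` such that `C ∩ A i`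
is finite for every `i < λ'`. -/
def starStatement (τ : Ordinal) (lam : Cardinal) : Prop :=
  ∀ lam' ≤ lam, ∀ A : Ordinal → Set Ordinal,
    (∀ i < lam'.ord, A i ⊆ Set.Iio ω₁ ∧ orderType (A i) ≤ τ) →
    ∃ C : Set Ordinal, IsClubOmegaOne C ∧ ∀ i < lam'.ord, (C ∩ A i).Finite

universe u v

lemma orderType_range_helper {f : ℕ → Ordinal.{u}} (hf : StrictMono f) :
    Ordinal.lift.{u+1} (Ordinal.type ((· < ·) : ℕ → ℕ → Prop))
      = Ordinal.lift.{0} (Ordinal.type ((· < ·) : (Set.range f) → (Set.range f) → Prop)) :=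
  RelIso.ordinal_lift_type_eq ((hf.orderIso f).toRelIsoLT)

lemma orderType_range_omega0 {f : ℕ → Ordinal.{u}} (hf : StrictMono f) :
    orderType (Set.range f) = Ordinal.omega0 := by
  have h := orderType_range_helper hf
  rw [Ordinal.type_nat_lt, Ordinal.lift_omega0, Ordinal.lift_uzero] at h
  exact h.symm

lemma stmt4_aux (lam : Cardinal.{u})
    (τ : Ordinal.{v+1}) (hτ0 : Ordinal.omega0 ≤ τ)
    (hstar : starStatement τ lam) :
    lam < Cardinal.continuum := by
  classical
  by_contra hcon
  push_neg at hcon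
  have hL : Cardinal.lift.{u+1} #(ℕ → Set.Iio (ω₁ : Ordinal.{v}))
      ≤ Cardinal.lift.{v+1} #(Set.Iio (Cardinal.continuum.{u}.ord)) := by
    simp only [Cardinal.mk_arrow, Ordinal.mk_Iio_ordinal, Ordinal.card_omega,
      Cardinal.card_ord, Cardinal.mk_nat, Cardinal.lift_uzero, Cardinal.lift_aleph0,
      Cardinal.lift_continuum, Cardinal.lift_power, Cardinal.lift_aleph, Ordinal.lift_one,
      Cardinal.lift_lift]
    calc (Cardinal.aleph 1) ^ (ℵ₀ : Cardinal) ≤ Cardinal.continuum ^ (ℵ₀ : Cardinal) :=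
          Cardinal.power_le_power_right Cardinal.aleph_one_le_continuum
      _ = Cardinal.continuum := Cardinal.continuum_power_aleph0
  obtain ⟨e⟩ := Cardinal.lift_mk_le'.mp hL
  set A : Ordinal → Set Ordinal := fun i =>
    ⋃ (f : ℕ → Set.Iio (ω₁ : Ordinal)) (_ : StrictMono f ∧ ((e f : Ordinal)) = i),
      Set.range (fun n => (f n : Ordinal)) with hA
  have hmem : ∀ i x, x ∈ A i ↔ ∃ f : ℕ → Set.Iio (ω₁ : Ordinal),
      (StrictMono f ∧ ((e f : Ordinal)) = i) ∧ ∃ n, (f n : Ordinal) = x := by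
    intro i x
    simp [hA, Set.mem_iUnion]
  have hcoe : ∀ {f : ℕ → Set.Iio (ω₁ : Ordinal)}, StrictMono f →
      StrictMono (fun n => (f n : Ordinal)) := by
    intro f hf a b h
    exact Subtype.coe_lt_coe.2 (hf h)
  have hAprop : ∀ i < Cardinal.continuum.ord, A i ⊆ Set.Iio ω₁ ∧ orderType (A i) ≤ τ := by
    intro i _
    constructor
    · intro x hx
      obtain ⟨f, _, n, rfl⟩ := (hmem i x).1 hx
      exact (f n).2
    · by_cases h : ∃ f : ℕ → Set.Iio (ω₁ : Ordinal), StrictMono f ∧ ((e f : Ordinal)) = i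
      · obtain ⟨f, hf, hfi⟩ := h
        have : A i = Set.range (fun n => (f n : Ordinal)) := by
          ext x
          rw [hmem i x]
          constructor
          · rintro ⟨f', ⟨hf', hf'i⟩, n, rfl⟩
            have hff : f' = f := e.injective (Subtype.coe_injective (hf'i.trans hfi.symm))
            exact ⟨n, by rw [hff]⟩
          · rintro ⟨n, rfl⟩
            exact ⟨f, ⟨hf, hfi⟩, n, rfl⟩
        rw [this, orderType_range_omega0 (hcoe hf)]
        exact hτ0
      · have : A i = ∅ := by
          ext x
          simp only [Set.mem_empty_iff_false, iff_false]
          intro hx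
          obtain ⟨f, ⟨hf, hfi⟩, _⟩ := (hmem i x).1 hx
          exact h ⟨f, hf, hfi⟩
        rw [this]
        have : orderType (∅ : Set Ordinal) = 0 := Ordinal.type_eq_zero_of_empty _
        rw [this]
        exact zero_le (a := τ)
  obtain ⟨C, hC, hfin⟩ := hstar Cardinal.continuum hcon A hAprop
  obtain ⟨hCsub, hCunb, _⟩ := hC
  choose g hgC hglt using hCunb
  have h0 : (0 : Ordinal) < ω₁ := Ordinal.omega_pos 1
  let c : ℕ → {β : Ordinal // β ∈ C} := fun n =>
    Nat.rec ⟨g 0 h0, hgC 0 h0⟩ (fun _ p => ⟨g p.1 (hCsub p.2), hgC _ _⟩) n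
  have hcsucc : ∀ n, (c n).1 < (c (n+1)).1 := fun n => hglt _ _
  have hcmono : StrictMono fun n => (c n).1 := strictMono_nat_of_lt_succ hcsucc
  let f : ℕ → Set.Iio (ω₁ : Ordinal) := fun n => ⟨(c n).1, hCsub (c n).2⟩
  have hf : StrictMono f := fun a b h => Subtype.mk_lt_mk.2 (hcmono h)
  have hi : ((e f : Ordinal)) < Cardinal.continuum.ord := (e f).2
  have hsub : Set.range (fun n => ((f n : Ordinal))) ⊆ C ∩ A (e f : Ordinal) := by
    rintro x ⟨n, rfl⟩
    exact ⟨(c n).2, (hmem _ _).2 ⟨f, ⟨hf, rfl⟩, n, rfl⟩⟩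
  have hinf : (C ∩ A (e f : Ordinal)).Infinite :=
    Set.Infinite.mono hsub (Set.infinite_range_of_injective (hcoe hf).injective)
  exact hinf (hfin _ hi)

/-- For a cardinal `λ ≥ ω₁` and an infinite countable ordinal `τ`, `(∗)^τ_λ` implies
`2^{ℵ₀} > λ`. -/
theorem stmt4 (lam : Cardinal) (hlam : Cardinal.aleph 1 ≤ lam)
    (τ : Ordinal) (hτ0 : Ordinal.omega0 ≤ τ) (hτ : τ < ω₁)
    (hstar : starStatement τ lam) :
    lam < Cardinal.continuum :=
  stmt4_aux lam τ hτ0 hstar
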